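/- Let (Ω, 𝓕, P) be a probability space, let A and I be finite nonempty sets, let δ ∈ (0,1), and let (π_n)_{n≥1} be positive reals with Σ_{n≥1} π_n^{−1} = 1 and |A|·|I|·π_n ≥ δ for all n. Set β_n := 2·log(|A|·|I|·π_n/δ). Suppose that for each n ≥ 1, a ∈ A and i ∈ I, X_{n,a,i} : Ω → ℝ is a random variable whose law is the Gaussian measure with mean μ_{n−1}(a,i) ∈ ℝ and variance σ_{n−1}(a,i)², where σ_{n−1}(a,i) > 0. Then with probability at least 1 − δ the following holds simultaneously for all n ≥ 1, a ∈ A and i ∈ I: |X_{n,a,i} − μ_{n−1}(a,i)| ≤ β_n^{1/2}·σ_{n−1}(a,i). -/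

import Mathlib

open MeasureTheory ProbabilityTheory Real Set Filter Topology
open scoped ENNReal NNReal

-- Step 1: upper tail integral bound
lemma gauss_tail_Ioi' {c : ℝ} (hc : 0 < c) :
    gaussianReal 0 1 (Ioi c) ≤ ENNReal.ofReal (rexp (-c^2/2) / (c * Real.sqrt (2*π))) := by
  have hS : (0:ℝ) < Real.sqrt (2*π) := Real.sqrt_pos.mpr (by positivity)
  set K : ℝ := (Real.sqrt (2*π))⁻¹ * rexp (-c^2/2) with hK
  have hK0 : 0 ≤ K := by positivity
  -- integral of the dominating exponential
  have hint : ∫ x in Ioi c, rexp (-(c*(x-c))) = 1/c := by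
    have hderiv : ∀ x ∈ Ici c, HasDerivAt (fun x => -(rexp (-(c*(x-c)))) / c)
        (rexp (-(c*(x-c)))) x := by
      intro x _
      have h1 : HasDerivAt (fun x : ℝ => -(c*(x-c))) (-c) x := by
        simpa using (((hasDerivAt_id x).sub_const c).const_mul (-c))
      have := (h1.exp).neg.div_const c
      refine this.congr_deriv ?_
      field_simp
    have hinteg : IntegrableOn (fun x => rexp (-(c*(x-c)))) (Ioi c) := by
      have h0 := (exp_neg_integrableOn_Ioi c hc).const_mul (rexp (c*c))
      refine IntegrableOn.congr_fun h0 (fun x _ => ?_) measurableSet_Ioi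
      rw [← Real.exp_add]; ring_nf
    have htend : Tendsto (fun x => -(rexp (-(c*(x-c)))) / c) atTop (𝓝 (-0/c)) := by
      refine Tendsto.div_const (Tendsto.neg ?_) _
      refine Real.tendsto_exp_atBot.comp ?_
      have : Tendsto (fun x : ℝ => -c * (x - c)) atTop atBot :=
        (tendsto_atTop_add_const_right atTop (-c) tendsto_id).const_mul_atTop_of_neg
          (neg_neg_iff_pos.2 hc)
      refine this.congr fun x => by ring
    have := MeasureTheory.integral_Ioi_of_hasDerivAt_of_tendsto'
      (f := fun x => -(rexp (-(c*(x-c)))) / c) hderiv hinteg htend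
    rw [this]
    simp
    field_simp
  -- pointwise bound + monotonicity
  have hpt : ∀ x ∈ Ioi c, gaussianPDFReal 0 1 x ≤ K * rexp (-(c*(x-c))) := by
    intro x hx
    simp only [gaussianPDFReal, NNReal.coe_one, mul_one, sub_zero, hK]
    rw [mul_assoc, ← Real.exp_add]
    refine mul_le_mul_of_nonneg_left ?_ (by positivity)
    apply Real.exp_le_exp.mpr
    have hx' : c ≤ x := le_of_lt hx
    nlinarith [sq_nonneg (x - c)]
  calc gaussianReal 0 1 (Ioi c) = ∫⁻ x in Ioi c, gaussianPDF 0 1 x :=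
        gaussianReal_apply 0 one_ne_zero _
    _ ≤ ∫⁻ x in Ioi c, ENNReal.ofReal (K * rexp (-(c*(x-c)))) := by
        refine setLIntegral_mono ?_ ?_
        · exact (measurable_const.mul ((measurable_id.sub_const c).const_mul c).neg.exp).ennreal_ofReal
        · intro x hx
          exact ENNReal.ofReal_le_ofReal (hpt x hx)
    _ = ENNReal.ofReal (∫ x in Ioi c, K * rexp (-(c*(x-c)))) := by
        rw [ofReal_integral_eq_lintegral_ofReal]
        · have h0 := (exp_neg_integrableOn_Ioi c hc).const_mul (K * rexp (c*c))
          refine IntegrableOn.congr_fun h0 (fun x _ => ?_) measurableSet_Ioi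
          rw [mul_assoc, ← Real.exp_add]; ring_nf
        · exact ae_of_all _ fun x => by positivity
    _ = ENNReal.ofReal (rexp (-c^2/2) / (c * Real.sqrt (2*π))) := by
        rw [MeasureTheory.integral_const_mul, hint]
        congr 1
        rw [hK]
        field_simp

lemma stdTail {c : ℝ} (hc : 0 ≤ c) :
    gaussianReal 0 1 {x | c < |x|} ≤ ENNReal.ofReal (rexp (-c^2/2)) := by
  have hS : (0:ℝ) < Real.sqrt (2*π) := Real.sqrt_pos.mpr (by positivity)
  rcases eq_or_lt_of_le hc with rfl | hc0
  · calc gaussianReal 0 1 {x | 0 < |x|} ≤ 1 := prob_le_one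
      _ = ENNReal.ofReal (rexp (-(0:ℝ)^2/2)) := by norm_num
  by_cases hc8 : c ≤ 4/5
  · -- small c
    have hset : {x : ℝ | c < |x|} = (Icc (-c) c)ᶜ := by
      ext x
      simp only [mem_setOf_eq, mem_compl_iff, mem_Icc, not_and_or, not_le, lt_abs]
      constructor
      · rintro (h | h)
        · right; exact h
        · left; linarith
      · rintro (h | h)
        · right; linarith
        · left; exact h
    have hlow : ENNReal.ofReal ((2*c) * gaussianPDFReal 0 1 c) ≤ gaussianReal 0 1 (Icc (-c) c) := by
      rw [gaussianReal_apply 0 one_ne_zero]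
      calc ENNReal.ofReal ((2*c) * gaussianPDFReal 0 1 c)
          = ENNReal.ofReal (gaussianPDFReal 0 1 c) * volume (Icc (-c) c) := by
            rw [Real.volume_Icc, ← ENNReal.ofReal_mul (gaussianPDFReal_nonneg 0 1 c)]
            rw [show c - -c = 2*c by ring, mul_comm (gaussianPDFReal 0 1 c)]
        _ = ∫⁻ _ in Icc (-c) c, ENNReal.ofReal (gaussianPDFReal 0 1 c) := by
            rw [setLIntegral_const]
        _ ≤ ∫⁻ x in Icc (-c) c, gaussianPDF 0 1 x := by
            refine setLIntegral_mono (measurable_gaussianPDF 0 1) ?_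
            intro x hx
            apply ENNReal.ofReal_le_ofReal
            simp only [gaussianPDFReal, NNReal.coe_one, mul_one, sub_zero]
            refine mul_le_mul_of_nonneg_left ?_ (by positivity)
            apply Real.exp_le_exp.mpr
            have h1 : -c ≤ x := hx.1
            have h2 : x ≤ c := hx.2
            nlinarith [sq_nonneg x]
    have hreal : 1 ≤ rexp (-c^2/2) + (2*c) * gaussianPDFReal 0 1 c := by
      simp only [gaussianPDFReal, NNReal.coe_one, mul_one, sub_zero]
      have hE : 1 - c^2/2 ≤ rexp (-c^2/2) := by
        have := Real.add_one_le_exp (-c^2/2); linarith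
      have hS1 : Real.sqrt (2*π) ≤ (251/100) := by
        rw [show ((251/100):ℝ) = Real.sqrt ((251/100)^2) from (Real.sqrt_sq (by norm_num)).symm]
        exact Real.sqrt_le_sqrt (by nlinarith [Real.pi_lt_d2])
      have hEpos : 0 < rexp (-c^2/2) := Real.exp_pos _
      have key : (2*c) * rexp (-c^2/2) / (251/100) ≤ (2*c) * ((Real.sqrt (2*π))⁻¹ * rexp (-c^2/2)) := by
        rw [show (2*c) * ((Real.sqrt (2*π))⁻¹ * rexp (-c^2/2))
            = (2*c) * rexp (-c^2/2) / Real.sqrt (2*π) by field_simp]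
        exact div_le_div_of_nonneg_left (by positivity) hS hS1
      have hpoly : 1 ≤ rexp (-c^2/2) + (2*c) * rexp (-c^2/2) / (251/100) := by
        have h1 : (1 - c^2/2) + (2*c) * (1 - c^2/2) / (251/100) ≤
            rexp (-c^2/2) + (2*c) * rexp (-c^2/2) / (251/100) := by
          have h2 : (2*c) * (1 - c^2/2) / (251/100) ≤ (2*c) * rexp (-c^2/2) / (251/100) := by
            apply div_le_div_of_nonneg_right ?_ (by norm_num)
            exact mul_le_mul_of_nonneg_left hE (by linarith)
          linarith
        have hcube : (0:ℝ) ≤ 2*c - (251/200)*c^2 - c^3 := by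
          nlinarith [mul_nonneg hc0.le (sub_nonneg.mpr hc8),
            mul_nonneg (mul_nonneg hc0.le hc0.le) (sub_nonneg.mpr hc8)]
        nlinarith [h1, hcube, hEpos.le, hc0.le]
      linarith
    rw [hset, measure_compl measurableSet_Icc (measure_ne_top _ _), measure_univ]
    refine le_trans (tsub_le_tsub_left hlow 1) ?_
    rw [tsub_le_iff_right, ← ENNReal.ofReal_add (Real.exp_pos _).le
      (mul_nonneg (by linarith) (gaussianPDFReal_nonneg 0 1 c)), ← ENNReal.ofReal_one]
    exact ENNReal.ofReal_le_ofReal hreal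
  · -- large c
    push_neg at hc8
    have hsub : {x : ℝ | c < |x|} ⊆ Iio (-c) ∪ Ioi c := by
      intro x hx
      have hx' : c < |x| := hx
      rcases lt_abs.mp hx' with h | h
      · exact Or.inr h
      · exact Or.inl (by simp only [mem_Iio]; linarith)
    have hmap : (gaussianReal 0 1).map (fun x => (-1:ℝ) * x) = gaussianReal 0 1 := by
      have h := gaussianReal_map_const_mul (μ := 0) (v := 1) (-1)
      have hv : NNReal.mk ((-1:ℝ)^2) (sq_nonneg _) = 1 := by ext; norm_num
      rw [hv] at h
      simpa using h
    have hsym : gaussianReal 0 1 (Iio (-c)) = gaussianReal 0 1 (Ioi c) := by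
      conv_lhs => rw [← hmap]
      rw [Measure.map_apply (measurable_const_mul _) measurableSet_Iio]
      congr 1
      ext x
      simp only [mem_preimage, mem_Iio, mem_Ioi]
      constructor <;> intro h <;> linarith
    have hc0' : (0:ℝ) < c := by linarith
    have hS2 : ((5/2):ℝ) ≤ Real.sqrt (2*π) := by
      rw [show ((5/2):ℝ) = Real.sqrt ((5/2)^2) from (Real.sqrt_sq (by norm_num)).symm]
      exact Real.sqrt_le_sqrt (by nlinarith [Real.pi_gt_d2])
    calc gaussianReal 0 1 {x | c < |x|}
        ≤ gaussianReal 0 1 (Iio (-c) ∪ Ioi c) := measure_mono hsub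
      _ ≤ gaussianReal 0 1 (Iio (-c)) + gaussianReal 0 1 (Ioi c) := measure_union_le _ _
      _ = 2 * gaussianReal 0 1 (Ioi c) := by rw [hsym, two_mul]
      _ ≤ 2 * ENNReal.ofReal (rexp (-c^2/2) / (c * Real.sqrt (2*π))) := by
          exact mul_le_mul_right (gauss_tail_Ioi' hc0') 2
      _ = ENNReal.ofReal (2 * (rexp (-c^2/2) / (c * Real.sqrt (2*π)))) := by
          rw [ENNReal.ofReal_mul (by norm_num : (0:ℝ) ≤ 2)]
          norm_num
      _ ≤ ENNReal.ofReal (rexp (-c^2/2)) := by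
          apply ENNReal.ofReal_le_ofReal
          have hcS : (2:ℝ) ≤ c * Real.sqrt (2*π) := by nlinarith
          rw [← mul_div_assoc, div_le_iff₀ (by positivity)]
          nlinarith [(Real.exp_pos (-c^2/2)).le]

lemma gauss_event {m σ t : ℝ} (hσ : 0 < σ) (ht : 0 ≤ t) :
    gaussianReal m (σ.toNNReal ^ 2) {x | t * σ < |x - m|} ≤ ENNReal.ofReal (rexp (-t^2/2)) := by
  have hveq : NNReal.mk (σ^2) (sq_nonneg σ) = σ.toNNReal ^ 2 := by
    refine NNReal.coe_injective ?_
    rw [NNReal.coe_pow, Real.coe_toNNReal σ hσ.le]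
    rfl
  have h1 : (gaussianReal 0 1).map (σ * ·) = gaussianReal 0 (σ.toNNReal ^ 2) := by
    have h := gaussianReal_map_const_mul (μ := 0) (v := 1) σ
    rw [mul_one, hveq] at h
    simpa using h
  have h2 : (gaussianReal 0 (σ.toNNReal ^ 2)).map (· + m)
      = gaussianReal m (σ.toNNReal ^ 2) := by
    have h := gaussianReal_map_add_const (μ := 0) (v := σ.toNNReal ^ 2) m
    simpa using h
  have hmeasset : MeasurableSet {x : ℝ | t * σ < |x - m|} :=
    measurableSet_lt measurable_const ((measurable_id.sub_const m).abs)
  rw [← h2, ← h1]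
  rw [Measure.map_apply (measurable_add_const m) hmeasset,
    Measure.map_apply (measurable_const_mul σ) ((measurable_add_const m) hmeasset)]
  have hpre : ((σ * ·) ⁻¹' ((· + m) ⁻¹' {x : ℝ | t * σ < |x - m|})) = {x : ℝ | t < |x|} := by
    ext x
    simp only [mem_preimage, mem_setOf_eq, add_sub_cancel_right]
    rw [abs_mul, abs_of_pos hσ, mul_comm σ]
    exact mul_lt_mul_iff_of_pos_right hσ
  rw [hpre]
  exact stdTail ht

theorem safeopt_confidence_intervals
    {Ω : Type*} [MeasurableSpace Ω] (P : Measure Ω) [IsProbabilityMeasure P]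
    {A I : Type*} [Fintype A] [Fintype I] [Nonempty A] [Nonempty I]
    (δ : ℝ) (hδ : δ ∈ Set.Ioo (0 : ℝ) 1)
    (pn : ℕ → ℝ) (hpnpos : ∀ n ≥ 1, 0 < pn n)
    (hpnsum : ∑' n : ℕ, (pn (n + 1))⁻¹ = 1)
    (hpnδ : ∀ n ≥ 1, δ ≤ (Fintype.card A : ℝ) * (Fintype.card I : ℝ) * pn n)
    (β : ℕ → ℝ)
    (hβ : ∀ n ≥ 1, β n =
      2 * Real.log ((Fintype.card A : ℝ) * (Fintype.card I : ℝ) * pn n / δ))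
    (m : ℕ → A → I → ℝ) (s : ℕ → A → I → ℝ) (hs : ∀ n a i, 0 < s n a i)
    (X : ℕ → A → I → Ω → ℝ) (hXmeas : ∀ n a i, Measurable (X n a i))
    (hXlaw : ∀ n, 1 ≤ n → ∀ (a : A) (i : I),
      P.map (X n a i) = gaussianReal (m n a i) ((s n a i).toNNReal ^ 2)) :
    ENNReal.ofReal (1 - δ) ≤
      P {ω : Ω | ∀ n, 1 ≤ n → ∀ (a : A) (i : I),
        |X n a i ω - m n a i| ≤ Real.sqrt (β n) * s n a i} := by
  obtain ⟨hδ0, hδ1⟩ := hδ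
  set K : ℝ := (Fintype.card A : ℝ) * (Fintype.card I : ℝ) with hKdef
  have hK0 : (0:ℝ) < K := by
    have h1 : 0 < Fintype.card A := Fintype.card_pos
    have h2 : 0 < Fintype.card I := Fintype.card_pos
    positivity
  -- bad events
  set Bad : ℕ → A → I → Set Ω := fun k a i =>
    {ω | Real.sqrt (β (k+1)) * s (k+1) a i < |X (k+1) a i ω - m (k+1) a i|} with hBad
  -- measure of each bad event
  have hbadmeas : ∀ (k : ℕ) (a : A) (i : I),
      P (Bad k a i) ≤ ENNReal.ofReal (δ * (pn (k+1))⁻¹ / K) := by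
    intro k a i
    have hn : 1 ≤ k + 1 := Nat.le_add_left 1 k
    have hKp : 0 < K * pn (k+1) := mul_pos hK0 (hpnpos _ hn)
    have hKpδ : 1 ≤ K * pn (k+1) / δ := by
      rw [le_div_iff₀ hδ0, one_mul]
      exact hpnδ _ hn
    have hβnn : 0 ≤ β (k+1) := by
      rw [hβ _ hn]
      have : (0:ℝ) ≤ Real.log (K * pn (k+1) / δ) := Real.log_nonneg hKpδ
      linarith
    have hset : MeasurableSet {x : ℝ | Real.sqrt (β (k+1)) * s (k+1) a i < |x - m (k+1) a i|} :=
      measurableSet_lt measurable_const ((measurable_id.sub_const _).abs)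
    have hPmap : P (Bad k a i)
        = (P.map (X (k+1) a i)) {x | Real.sqrt (β (k+1)) * s (k+1) a i < |x - m (k+1) a i|} := by
      rw [Measure.map_apply (hXmeas _ _ _) hset]
      rfl
    rw [hPmap, hXlaw _ hn]
    refine le_trans (gauss_event (hs _ a i) (Real.sqrt_nonneg _)) ?_
    apply ENNReal.ofReal_le_ofReal
    rw [Real.sq_sqrt hβnn, hβ _ hn]
    have : rexp (-(2 * Real.log (K * pn (k+1) / δ)) / 2) = δ / (K * pn (k+1)) := by
      rw [show -(2 * Real.log (K * pn (k+1) / δ)) / 2 = -Real.log (K * pn (k+1) / δ) by ring,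
        Real.exp_neg, Real.exp_log (by positivity)]
      exact inv_div _ _
    rw [this]
    apply le_of_eq
    field_simp [hK0.ne', (hpnpos _ hn).ne']
  -- union bound
  set G : Set Ω := {ω : Ω | ∀ n, 1 ≤ n → ∀ (a : A) (i : I),
    |X n a i ω - m n a i| ≤ Real.sqrt (β n) * s n a i} with hG
  have hcompl : Gᶜ ⊆ ⋃ (k : ℕ) (a : A) (i : I), Bad k a i := by
    intro ω hω
    simp only [hG, mem_compl_iff, mem_setOf_eq, not_forall, not_le] at hω
    obtain ⟨n, hn, a, i, hlt⟩ := hω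
    obtain ⟨k, rfl⟩ := Nat.exists_eq_add_of_le hn
    refine mem_iUnion.mpr ⟨k, mem_iUnion.mpr ⟨a, mem_iUnion.mpr ⟨i, ?_⟩⟩⟩
    simpa [hBad, add_comm] using hlt
  have hsummable : Summable (fun k : ℕ => (pn (k+1))⁻¹) := by
    by_contra h
    rw [tsum_eq_zero_of_not_summable h] at hpnsum
    norm_num at hpnsum
  have hbound : P Gᶜ ≤ ENNReal.ofReal δ := by
    calc P Gᶜ ≤ P (⋃ (k : ℕ) (a : A) (i : I), Bad k a i) := measure_mono hcompl
      _ ≤ ∑' (k : ℕ), P (⋃ (a : A) (i : I), Bad k a i) := measure_iUnion_le _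
      _ ≤ ∑' (k : ℕ), ENNReal.ofReal (δ * (pn (k+1))⁻¹) := by
          refine ENNReal.tsum_le_tsum fun k => ?_
          calc P (⋃ (a : A) (i : I), Bad k a i)
              ≤ ∑' (a : A), P (⋃ (i : I), Bad k a i) := measure_iUnion_le _
            _ ≤ ∑' (a : A), ∑' (i : I), P (Bad k a i) :=
                ENNReal.tsum_le_tsum fun a => measure_iUnion_le _
            _ ≤ ∑' (_ : A), ∑' (_ : I), ENNReal.ofReal (δ * (pn (k+1))⁻¹ / K) :=
                ENNReal.tsum_le_tsum fun a => ENNReal.tsum_le_tsum fun i => hbadmeas k a i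
            _ = (Fintype.card A : ℝ≥0∞) * ((Fintype.card I : ℝ≥0∞)
                  * ENNReal.ofReal (δ * (pn (k+1))⁻¹ / K)) := by
                simp only [tsum_fintype, Finset.sum_const, nsmul_eq_mul, Finset.card_univ]
            _ = ENNReal.ofReal (δ * (pn (k+1))⁻¹) := by
                rw [← ENNReal.ofReal_natCast (Fintype.card A), ← ENNReal.ofReal_natCast (Fintype.card I),
                  ← ENNReal.ofReal_mul (by positivity), ← ENNReal.ofReal_mul (by positivity)]
                congr 1
                have hpn : 0 < pn (k+1) := hpnpos _ (Nat.le_add_left 1 k)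
                field_simp [hKdef]
                ring
      _ = ENNReal.ofReal δ := by
          rw [← ENNReal.ofReal_tsum_of_nonneg (fun k => by
              have hpn : 0 < pn (k+1) := hpnpos _ (Nat.le_add_left 1 k)
              positivity) (hsummable.mul_left δ)]
          rw [tsum_mul_left, hpnsum, mul_one]
  -- conclude
  have huniv : (1 : ℝ≥0∞) ≤ P G + ENNReal.ofReal δ := by
    calc (1 : ℝ≥0∞) = P univ := (measure_univ).symm
      _ = P (G ∪ Gᶜ) := by rw [union_compl_self]
      _ ≤ P G + P Gᶜ := measure_union_le _ _
      _ ≤ P G + ENNReal.ofReal δ := add_le_add_right hbound _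
  have h1 : ENNReal.ofReal (1 - δ) + ENNReal.ofReal δ ≤ P G + ENNReal.ofReal δ := by
    rw [← ENNReal.ofReal_add (by linarith) hδ0.le]
    rw [show 1 - δ + δ = 1 by ring, ENNReal.ofReal_one]
    exact huniv
  exact ENNReal.le_of_add_le_add_right ENNReal.ofReal_ne_top h1
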